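/- Let V be a complex inner product space with orthonormal basis e₁,…,e_n, let v₁,…,v_k ∈ V be pairwise orthogonal nonzero vectors, and let a = (a₁,…,a_k) be nonnegative integers with a₁+⋯+a_k = n. Then |∑_{r ∼ a} ⟨e₁, v_{r(1)}⟩ ⋯ ⟨e_n, v_{r(n)}⟩|² ≤ (‖v₁‖^{2a₁} ⋯ ‖v_k‖^{2a_k}) / (a₁^{a₁} ⋯ a_k^{a_k}). -/

import Mathlib

open Finset in
private lemma aux_root_filter {N : ℕ} {ω : ℂ} (hω : IsPrimitiveRoot ω N) (e : ℕ) :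
    (∑ x : Fin N, ω ^ ((x : ℕ) * e)) = if N ∣ e then (N : ℂ) else 0 := by
  have hpow : ∀ x : Fin N, ω ^ ((x : ℕ) * e) = (ω ^ e) ^ (x : ℕ) := by
    intro x; rw [mul_comm, pow_mul]
  simp_rw [hpow]
  rw [Fin.sum_univ_eq_sum_range (fun i => (ω ^ e) ^ i) N]
  by_cases hd : N ∣ e
  · have : ω ^ e = 1 := (hω.pow_eq_one_iff_dvd e).mpr hd
    simp [this, hd]
  · have h1 : ω ^ e ≠ 1 := fun h => hd ((hω.pow_eq_one_iff_dvd e).mp h)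
    rw [geom_sum_eq h1, if_neg hd]
    have : (ω ^ e) ^ N = 1 := by
      rw [← pow_mul, mul_comm, pow_mul, hω.pow_eq_one, one_pow]
    rw [this]; simp

private lemma aux_fiber_prod {n k : ℕ} (r : Fin n → Fin k) (h : Fin k → ℂ) :
    ∏ i, h (r i) = ∏ j, h j ^ (Finset.univ.filter fun x => r x = j).card := by
  rw [← Finset.prod_fiberwise' Finset.univ r h]
  exact Finset.prod_congr rfl fun j _ => by rw [Finset.prod_const]

private lemma aux_parseval {V : Type*} [NormedAddCommGroup V] [InnerProductSpace ℂ V]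
    {n : ℕ} (b : Module.Basis (Fin n) ℂ V) (he : Orthonormal ℂ b) (w : V) :
    ∑ i, ‖(inner ℂ (b i) w : ℂ)‖ ^ 2 = ‖w‖ ^ 2 := by
  let o : OrthonormalBasis (Fin n) ℂ V := b.toOrthonormalBasis he
  have hcoe : ∀ i, o i = b i := fun i => by simp [o, Module.Basis.coe_toOrthonormalBasis]
  have h1 : ‖w‖ = ‖o.repr w‖ := (o.repr.norm_map w).symm
  rw [h1, EuclideanSpace.norm_eq, Real.sq_sqrt (by positivity)]
  refine Finset.sum_congr rfl fun i _ => ?_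
  rw [o.repr_apply_apply, hcoe]

private lemma aux_inner_self {V : Type*} [NormedAddCommGroup V] [InnerProductSpace ℂ V]
    {k : ℕ} (v : Fin k → V) (hv : ∀ i j, i ≠ j → (inner ℂ (v i) (v j) : ℂ) = 0)
    (t : Fin k → ℂ) :
    (inner ℂ (∑ j, t j • v j) (∑ j, t j • v j) : ℂ) = ∑ j, (‖t j‖:ℂ)^2 * (‖v j‖:ℂ)^2 := by
  rw [inner_sum]
  refine Finset.sum_congr rfl fun j _ => ?_
  rw [inner_smul_right, sum_inner]
  rw [Finset.sum_eq_single j]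
  · rw [inner_smul_left, inner_self_eq_norm_sq_to_K, ← mul_assoc, Complex.mul_conj,
      Complex.normSq_eq_norm_sq]
    push_cast
    norm_cast
    exact (Complex.ofReal_mul _ _).symm
  · intro l _ hl
    simp [inner_smul_left, hv l j hl]
  · intro h; exact absurd (Finset.mem_univ j) h

private lemma aux_amgm {n : ℕ} (hn : n ≠ 0) (z : Fin n → ℝ) (hz : ∀ i, 0 ≤ z i)
    (hs : ∑ i, z i = n) : ∏ i, z i ≤ 1 := by
  have h := Real.geom_mean_le_arith_mean_weighted Finset.univ (fun _ => 1 / n) z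
    (fun i _ => by positivity)
    (by simp [Finset.card_univ]; field_simp)
    (fun i _ => hz i)
  have h2 : ∑ i, (1 / n : ℝ) * z i = 1 := by
    rw [← Finset.mul_sum, hs]; field_simp
  rw [h2] at h
  have h3 : ∏ i, z i ^ (1 / n : ℝ) = (∏ i, z i) ^ (1 / n : ℝ) := by
    rw [← Real.finset_prod_rpow Finset.univ z (fun i _ => hz i)]
  rw [h3] at h
  have h4 : (0:ℝ) ≤ ∏ i, z i := Finset.prod_nonneg fun i _ => hz i
  calc ∏ i, z i = ((∏ i, z i) ^ (1/n:ℝ)) ^ (n:ℝ) := by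
        rw [← Real.rpow_mul h4, one_div, inv_mul_cancel₀ (by exact_mod_cast hn)]
        exact (Real.rpow_one _).symm
    _ ≤ 1 ^ (n:ℝ) := Real.rpow_le_rpow (Real.rpow_nonneg h4 _) h (by positivity)
    _ = 1 := Real.one_rpow _

open Finset in
open Classical in
theorem stmt_12 {V : Type*} [NormedAddCommGroup V] [InnerProductSpace ℂ V]
    {n k : ℕ} (b : Module.Basis (Fin n) ℂ V) (he : Orthonormal ℂ b)
    (v : Fin k → V) (hv : ∀ i j, i ≠ j → (inner ℂ (v i) (v j) : ℂ) = 0)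
    (hv0 : ∀ i, v i ≠ 0) (a : Fin k → ℕ) (ha : ∑ i, a i = n) :
    ‖∑ r ∈ Finset.univ.filter
          (fun r : Fin n → Fin k =>
            ∀ i, (Finset.univ.filter fun x => r x = i).card = a i),
        ∏ i, (inner ℂ (b i) (v (r i)) : ℂ)‖ ^ 2
      ≤ (∏ i, ‖v i‖ ^ (2 * a i)) / ∏ i, (a i : ℝ) ^ (a i) := by
  set S : ℂ := ∑ r ∈ Finset.univ.filter
          (fun r : Fin n → Fin k =>
            ∀ i, (Finset.univ.filter fun x => r x = i).card = a i),
        ∏ i, (inner ℂ (b i) (v (r i)) : ℂ) with hS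
  set N := n + 1 with hNdef
  set ω : ℂ := Complex.exp (2 * Real.pi * Complex.I / N) with hωd
  have hω : IsPrimitiveRoot ω N := Complex.isPrimitiveRoot_exp N (by omega)
  have hωnorm : ‖ω‖ = 1 := Complex.norm_eq_one_of_pow_eq_one hω.pow_eq_one (by omega)
  set ρ : Fin k → ℝ := fun j => Real.sqrt (a j) / ‖v j‖ with hρd
  have hvne : ∀ j, ‖v j‖ ≠ 0 := fun j => norm_ne_zero_iff.mpr (hv0 j)
  have hρ0 : ∀ j, 0 ≤ ρ j := fun j => div_nonneg (Real.sqrt_nonneg _) (norm_nonneg _)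
  have hρsq : ∀ j, ρ j ^ 2 = (a j : ℝ) / ‖v j‖ ^ 2 := by
    intro j
    rw [hρd]; dsimp only
    rw [div_pow, Real.sq_sqrt (Nat.cast_nonneg _)]
  set t : (Fin k → Fin N) → Fin k → ℂ := fun m j => (ρ j : ℂ) * ω ^ ((m j : ℕ)) with htd
  have htnorm : ∀ m j, ‖t m j‖ = ρ j := by
    intro m j
    rw [htd]; dsimp only
    rw [norm_mul, norm_pow, hωnorm, one_pow, mul_one, Complex.norm_real,
      Real.norm_eq_abs, abs_of_nonneg (hρ0 j)]
  set w : (Fin k → Fin N) → V := fun m => ∑ j, t m j • v j with hwd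
  -- ‖w m‖² = n
  have hwnorm : ∀ m, ‖w m‖ ^ 2 = (n : ℝ) := by
    intro m
    have h1 : (inner ℂ (w m) (w m) : ℂ) = ∑ j, (‖t m j‖:ℂ)^2 * (‖v j‖:ℂ)^2 :=
      aux_inner_self v hv (t m)
    have h2 : (inner ℂ (w m) (w m) : ℂ) = ((‖w m‖ : ℂ)) ^ 2 := inner_self_eq_norm_sq_to_K _
    have h3 : ∀ j, (‖t m j‖:ℂ)^2 * (‖v j‖:ℂ)^2 = ((a j : ℝ) : ℂ) := by
      intro j
      rw [htnorm m j]
      have : (ρ j)^2 * ‖v j‖^2 = (a j : ℝ) := by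
        rw [hρsq j, div_mul_cancel₀ _ (pow_ne_zero 2 (hvne j))]
      exact_mod_cast congrArg (Complex.ofReal) this
    have h4 : (inner ℂ (w m) (w m) : ℂ) = ((n : ℝ) : ℂ) := by
      rw [h1, Finset.sum_congr rfl fun j _ => h3 j, ← ha]
      push_cast
      rfl
    rw [h2] at h4
    exact_mod_cast h4
  -- |∏ inner| ≤ 1
  have hF : ∀ m, ‖∏ i, (inner ℂ (b i) (w m) : ℂ)‖ ≤ 1 := by
    intro m
    rcases Nat.eq_zero_or_pos n with hn | hn
    · have huniv : (Finset.univ : Finset (Fin n)) = ∅ :=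
        Finset.card_eq_zero.mp (by simp [hn])
      rw [huniv, Finset.prod_empty, norm_one]
    · have h1 : ‖∏ i, (inner ℂ (b i) (w m) : ℂ)‖ ^ 2
          = ∏ i, ‖(inner ℂ (b i) (w m) : ℂ)‖ ^ 2 := by
        rw [norm_prod, Finset.prod_pow]
      have h2 : ∏ i, ‖(inner ℂ (b i) (w m) : ℂ)‖ ^ 2 ≤ 1 := by
        apply aux_amgm (Nat.pos_iff_ne_zero.mp hn) _ (fun i => by positivity)
        rw [aux_parseval b he (w m), hwnorm m]
      have h3 : ‖∏ i, (inner ℂ (b i) (w m) : ℂ)‖ ^ 2 ≤ 1 := h1 ▸ h2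
      exact (pow_le_one_iff_of_nonneg (norm_nonneg _) two_ne_zero).mp h3
  -- combinatorial data
  set cnt : (Fin n → Fin k) → Fin k → ℕ :=
    fun r j => (Finset.univ.filter fun x => r x = j).card with hcntd
  have hcnt_le : ∀ r j, cnt r j ≤ n := fun r j =>
    le_trans (Finset.card_filter_le _ _) (by simp)
  have ha_le : ∀ j, a j ≤ n :=
    fun j => ha ▸ Finset.single_le_sum (fun i _ => Nat.zero_le _) (Finset.mem_univ j)
  have hdvd : ∀ r j, (N ∣ (N - a j + cnt r j)) ↔ cnt r j = a j := by
    intro r j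
    have h1 := ha_le j
    have h2 := hcnt_le r j
    constructor
    · intro hd
      have hx : N - a j + cnt r j = N :=
        Nat.eq_of_dvd_of_lt_two_mul (by omega) hd (by omega)
      omega
    · intro h; exact ⟨1, by omega⟩
  set ε : (Fin k → Fin N) → ℂ := fun m => ∏ j, ω ^ ((m j : ℕ) * (N - a j)) with hεd
  have hεnorm : ∀ m, ‖ε m‖ = 1 := by
    intro m
    rw [hεd]; dsimp only
    rw [norm_prod]
    simp [hωnorm]
  -- inner roots-of-unity sum
  have hinner : ∀ r : Fin n → Fin k,
      (∑ m : Fin k → Fin N, ε m * ∏ j, (ω ^ ((m j : ℕ))) ^ cnt r j)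
        = if (∀ j, cnt r j = a j) then ((N:ℂ))^k else 0 := by
    intro r
    have hstep : ∀ m : Fin k → Fin N,
        ε m * ∏ j, (ω ^ ((m j : ℕ))) ^ cnt r j
          = ∏ j, ω ^ ((m j : ℕ) * (N - a j + cnt r j)) := by
      intro m
      rw [hεd]; dsimp only
      rw [← Finset.prod_mul_distrib]
      refine Finset.prod_congr rfl fun j _ => ?_
      rw [← pow_mul, ← pow_add, ← Nat.mul_add]
    simp_rw [hstep]
    rw [← Fintype.piFinset_univ,
      ← Finset.prod_univ_sum (fun _ : Fin k => (Finset.univ : Finset (Fin N)))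
        (fun j x => ω ^ ((x : ℕ) * (N - a j + cnt r j)))]
    have h2 : ∀ j ∈ Finset.univ, (∑ x : Fin N, ω ^ ((x:ℕ) * (N - a j + cnt r j)))
        = if N ∣ (N - a j + cnt r j) then (N:ℂ) else 0 :=
      fun j _ => aux_root_filter hω _
    rw [Finset.prod_congr rfl h2]
    by_cases hall : ∀ j, cnt r j = a j
    · rw [if_pos hall]
      have h3 : ∀ j ∈ Finset.univ,
          (if N ∣ (N - a j + cnt r j) then (N:ℂ) else 0) = (N:ℂ) :=
        fun j _ => if_pos ((hdvd r j).mpr (hall j))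
      rw [Finset.prod_congr rfl h3, Finset.prod_const, Finset.card_univ, Fintype.card_fin]
    · rw [if_neg hall]
      push_neg at hall
      obtain ⟨j0, hj0⟩ := hall
      exact Finset.prod_eq_zero (Finset.mem_univ j0)
        (if_neg fun hd => hj0 ((hdvd r j0).mp hd))
  -- the key identity
  have key : (∑ m : Fin k → Fin N, ε m * ∏ i, (inner ℂ (b i) (w m) : ℂ))
      = ((N:ℂ))^k * (∏ j, ((ρ j : ℂ)) ^ a j) * S := by
    have step1 : ∀ (m : Fin k → Fin N) (i : Fin n),
        (inner ℂ (b i) (w m) : ℂ) = ∑ j, t m j * (inner ℂ (b i) (v j) : ℂ) := by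
      intro m i
      rw [hwd]; dsimp only
      rw [inner_sum]
      exact Finset.sum_congr rfl fun j _ => inner_smul_right _ _ _
    have step2 : ∀ m : Fin k → Fin N,
        (∏ i, (inner ℂ (b i) (w m) : ℂ))
          = ∑ r : Fin n → Fin k, ∏ i, t m (r i) * (inner ℂ (b i) (v (r i)) : ℂ) := by
      intro m
      simp_rw [step1 m]
      rw [Finset.prod_univ_sum (fun _ : Fin n => (Finset.univ : Finset (Fin k)))
        (fun i j => t m j * (inner ℂ (b i) (v j) : ℂ)), Fintype.piFinset_univ]
    have hsplit : ∀ (m : Fin k → Fin N) (r : Fin n → Fin k),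
        (∏ i, t m (r i) * (inner ℂ (b i) (v (r i)) : ℂ))
          = (∏ i, ((ρ (r i) : ℂ))) * (∏ i, ω ^ ((m (r i) : ℕ)))
            * (∏ i, (inner ℂ (b i) (v (r i)) : ℂ)) := by
      intro m r
      rw [← Finset.prod_mul_distrib, ← Finset.prod_mul_distrib]
    have hfib : ∀ (r : Fin n → Fin k) (h : Fin k → ℂ),
        (∏ i, h (r i)) = ∏ j, h j ^ cnt r j := by
      intro r h
      simp only [hcntd]
      rw [← Finset.prod_fiberwise' Finset.univ r h]
      exact Finset.prod_congr rfl fun j _ => by rw [Finset.prod_const]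
    have hfiltereq :
        (Finset.univ.filter (fun r : Fin n → Fin k => ∀ j, cnt r j = a j))
          = (Finset.univ.filter (fun r : Fin n → Fin k =>
              ∀ i, (Finset.univ.filter fun x => r x = i).card = a i)) := by
      apply Finset.filter_congr
      intro r _
      simp [hcntd]
    calc (∑ m : Fin k → Fin N, ε m * ∏ i, (inner ℂ (b i) (w m) : ℂ))
        = ∑ m : Fin k → Fin N, ∑ r : Fin n → Fin k,
            ε m * ((∏ j, ((ρ j : ℂ)) ^ cnt r j) * (∏ j, (ω ^ ((m j : ℕ))) ^ cnt r j)
              * (∏ i, (inner ℂ (b i) (v (r i)) : ℂ))) := by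
          refine Finset.sum_congr rfl fun m _ => ?_
          rw [step2 m, Finset.mul_sum]
          refine Finset.sum_congr rfl fun r _ => ?_
          rw [hsplit m r, hfib r (fun j => ((ρ j : ℂ))),
            hfib r (fun j => ω ^ ((m j : ℕ)))]
      _ = ∑ r : Fin n → Fin k,
            ((∏ j, ((ρ j : ℂ)) ^ cnt r j) * (∏ i, (inner ℂ (b i) (v (r i)) : ℂ)))
              * ∑ m : Fin k → Fin N, ε m * ∏ j, (ω ^ ((m j : ℕ))) ^ cnt r j := by
          rw [Finset.sum_comm]
          refine Finset.sum_congr rfl fun r _ => ?_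
          rw [Finset.mul_sum]
          refine Finset.sum_congr rfl fun m _ => ?_
          ring
      _ = ∑ r : Fin n → Fin k,
            ((∏ j, ((ρ j : ℂ)) ^ cnt r j) * (∏ i, (inner ℂ (b i) (v (r i)) : ℂ)))
              * (if (∀ j, cnt r j = a j) then ((N:ℂ))^k else 0) := by
          refine Finset.sum_congr rfl fun r _ => ?_
          rw [hinner r]
      _ = ∑ r ∈ Finset.univ.filter (fun r : Fin n → Fin k => ∀ j, cnt r j = a j),
            ((∏ j, ((ρ j : ℂ)) ^ cnt r j) * (∏ i, (inner ℂ (b i) (v (r i)) : ℂ)))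
              * ((N:ℂ))^k := by
          rw [Finset.sum_filter]
          refine Finset.sum_congr rfl fun r _ => ?_
          by_cases h : ∀ j, cnt r j = a j <;> simp [h]
      _ = ((N:ℂ))^k * (∏ j, ((ρ j : ℂ)) ^ a j) * S := by
          rw [hfiltereq, hS, Finset.mul_sum]
          refine Finset.sum_congr rfl fun r hr => ?_
          have hr' : ∀ i, (Finset.univ.filter fun x => r x = i).card = a i :=
            (Finset.mem_filter.mp hr).2
          have hr'' : ∀ j, cnt r j = a j := by
            intro j; simp only [hcntd]; exact hr' j
          rw [Finset.prod_congr rfl fun j _ => by rw [hr'' j]]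
          ring
  -- bounding
  set P : ℝ := ∏ j, ρ j ^ a j with hPd
  have hPpos : 0 < P := by
    rw [hPd]
    refine Finset.prod_pos fun j _ => ?_
    rcases Nat.eq_zero_or_pos (a j) with h | h
    · simp [h]
    · apply pow_pos
      apply div_pos (Real.sqrt_pos.mpr (by exact_mod_cast h))
        (norm_pos_iff.mpr (hv0 j))
  have hPcast : (∏ j, ((ρ j : ℂ)) ^ a j) = ((P : ℂ)) := by
    rw [hPd]; push_cast; rfl
  have hbound : ((N:ℝ))^k * (P * ‖S‖) ≤ ((N:ℝ))^k := by
    have h1 : ‖(∑ m : Fin k → Fin N, ε m * ∏ i, (inner ℂ (b i) (w m) : ℂ))‖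
        ≤ ((N:ℝ))^k := by
      calc ‖(∑ m : Fin k → Fin N, ε m * ∏ i, (inner ℂ (b i) (w m) : ℂ))‖
          ≤ ∑ m : Fin k → Fin N, ‖ε m * ∏ i, (inner ℂ (b i) (w m) : ℂ)‖ :=
            norm_sum_le _ _
        _ ≤ ∑ _m : Fin k → Fin N, (1:ℝ) := by
            refine Finset.sum_le_sum fun m _ => ?_
            rw [norm_mul, hεnorm m, one_mul]
            exact hF m
        _ = ((N:ℝ))^k := by
            rw [Finset.sum_const, Finset.card_univ]
            simp [Fintype.card_fun]
    rw [key, hPcast] at h1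
    have h2 : ‖((N:ℂ))^k * ((P:ℂ)) * S‖ = ((N:ℝ))^k * (P * ‖S‖) := by
      rw [norm_mul, norm_mul, norm_pow]
      rw [Complex.norm_natCast, Complex.norm_real, Real.norm_eq_abs,
        abs_of_pos hPpos, mul_assoc]
    rw [h2] at h1
    exact h1
  have hfinal : P * ‖S‖ ≤ 1 := by
    have hNk : (0:ℝ) < ((N:ℝ))^k := by positivity
    have h' : ((N:ℝ))^k * (P * ‖S‖) ≤ ((N:ℝ))^k * 1 := by rw [mul_one]; exact hbound
    exact le_of_mul_le_mul_left h' hNk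
  -- conclude
  have hP2 : P ^ 2 = (∏ j, (a j : ℝ) ^ (a j)) / (∏ j, ‖v j‖ ^ (2 * a j)) := by
    calc P^2 = ∏ j, ((a j:ℝ) ^ (a j) / ‖v j‖ ^ (2 * a j)) := by
          rw [hPd, ← Finset.prod_pow]
          refine Finset.prod_congr rfl fun j _ => ?_
          rw [← pow_mul, mul_comm (a j) 2, pow_mul, hρsq j, div_pow, ← pow_mul,
            mul_comm 2 (a j), mul_comm (a j) 2]
      _ = _ := Finset.prod_div_distrib _ _
  have hvpos : (0:ℝ) < ∏ j, ‖v j‖ ^ (2 * a j) := by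
    refine Finset.prod_pos fun j _ => ?_
    exact pow_pos (norm_pos_iff.mpr (hv0 j)) _
  have hapos : (0:ℝ) < ∏ j, (a j:ℝ) ^ (a j) := by
    refine Finset.prod_pos fun j _ => ?_
    rcases Nat.eq_zero_or_pos (a j) with h | h
    · simp [h]
    · exact pow_pos (by exact_mod_cast h) _
  have h9 : ‖S‖^2 ≤ 1 / P^2 := by
    rw [le_div_iff₀ (by positivity)]
    have hps : 0 ≤ P * ‖S‖ := mul_nonneg hPpos.le (norm_nonneg S)
    nlinarith [hfinal, hps, mul_self_nonneg (P * ‖S‖)]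
  have h10 : (1:ℝ) / P^2 = (∏ j, ‖v j‖ ^ (2 * a j)) / (∏ j, (a j:ℝ) ^ (a j)) := by
    rw [hP2, one_div_div]
  rw [h10] at h9
  exact h9
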